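/- Let m ≥ 3 and let A ∈ ℝ^{m×m} be row-stochastic, irreducible, and zero-diagonal, with dominant left eigenvector c (the unique c in the m-simplex with cᵀA = cᵀ, which has strictly positive entries). Then for every ζ ∈ (0,1) there exists a unique vector x ∈ ℝ^m with 0 < x_i < 1 for all i, ∑_{i=1}^m x_i = ζ, and x_i(1 − x_i) = α c_i for all i for some scalar α > 0; moreover this x satisfies x_i > x_j if and only if c_i > c_j, and x_i = x_j if and only if c_i = c_j. -/

import Mathlib

open Real

noncomputable def sroot (p : ℝ) : ℝ := (1 - Real.sqrt (1 - 4*p))/2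

lemma sroot_le_half (p : ℝ) : sroot p ≤ 1/2 := by
  have := Real.sqrt_nonneg (1 - 4*p); unfold sroot; linarith

lemma sroot_nonneg {p : ℝ} (h0 : 0 ≤ p) (hp : p ≤ 1/4) : 0 ≤ sroot p := by
  have h : Real.sqrt (1 - 4*p) ≤ 1 := Real.sqrt_le_one.mpr (by linarith)
  unfold sroot; linarith

lemma sroot_eq {p : ℝ} (h0 : 0 ≤ p) (hp : p ≤ 1/4) : sroot p * (1 - sroot p) = p := by
  have h : Real.sqrt (1 - 4*p) ^ 2 = 1 - 4*p := Real.sq_sqrt (by linarith)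
  unfold sroot; nlinarith [h]

lemma sroot_pos {p : ℝ} (h0 : 0 < p) : 0 < sroot p := by
  have h : Real.sqrt (1 - 4*p) < 1 := by
    rcases le_or_gt (1 - 4*p) 0 with h | h
    · have : Real.sqrt (1 - 4*p) = 0 := Real.sqrt_eq_zero_of_nonpos h
      rw [this]; norm_num
    · calc Real.sqrt (1-4*p) < Real.sqrt 1 := Real.sqrt_lt_sqrt (by linarith) (by linarith)
        _ = 1 := Real.sqrt_one
  unfold sroot; linarith

lemma sroot_mono {p q : ℝ} (h0 : 0 ≤ p) (hpq : p < q) (hq : q ≤ 1/4) : sroot p < sroot q := by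
  have : Real.sqrt (1 - 4*q) < Real.sqrt (1 - 4*p) :=
    Real.sqrt_lt_sqrt (by linarith) (by linarith)
  unfold sroot; linarith

lemma sroot_mono_weak {p q : ℝ} (hpq : p ≤ q) : sroot p ≤ sroot q := by
  have : Real.sqrt (1 - 4*q) ≤ Real.sqrt (1 - 4*p) := Real.sqrt_le_sqrt (by linarith)
  unfold sroot; linarith

lemma sroot_le_two {p : ℝ} (h0 : 0 ≤ p) (hp : p ≤ 1/4) : sroot p ≤ 2*p := by
  have h1 := sroot_eq h0 hp
  have h2 := sroot_le_half p
  have h3 := sroot_nonneg h0 hp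
  nlinarith

lemma chord {r u₁ u₂ : ℝ} (hr0 : 0 ≤ r) (hr1 : r ≤ 1) (hu0 : 0 ≤ u₁)
    (hu12 : u₁ ≤ u₂) (hu21 : u₂ ≤ 1) :
    (Real.sqrt (1 - r + r*u₂^2) - Real.sqrt (1 - r + r*u₁^2)) * (1 - u₂) ≤
      (u₂ - u₁) * (1 - Real.sqrt (1 - r + r*u₂^2)) := by
  set w₁ := Real.sqrt (1 - r + r*u₁^2) with hw₁def
  set w₂ := Real.sqrt (1 - r + r*u₂^2) with hw₂def
  have ha₁ : 0 ≤ 1 - r + r*u₁^2 := by nlinarith [sq_nonneg u₁]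
  have ha₂ : 0 ≤ 1 - r + r*u₂^2 := by nlinarith [sq_nonneg u₂]
  have hw₁sq : w₁^2 = 1 - r + r*u₁^2 := Real.sq_sqrt ha₁
  have hw₂sq : w₂^2 = 1 - r + r*u₂^2 := Real.sq_sqrt ha₂
  have hw₁0 : 0 ≤ w₁ := Real.sqrt_nonneg _
  have hw₂0 : 0 ≤ w₂ := Real.sqrt_nonneg _
  have hu20 : 0 ≤ u₂ := le_trans hu0 hu12
  have husq : u₁^2 ≤ u₂^2 := by nlinarith
  have hu21sq : u₂^2 ≤ 1 := by nlinarith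
  have hw12 : w₁ ≤ w₂ := Real.sqrt_le_sqrt
    (by nlinarith [mul_le_mul_of_nonneg_left husq hr0])
  have hw₂1 : w₂ ≤ 1 := Real.sqrt_le_one.mpr
    (by nlinarith [mul_le_mul_of_nonneg_left hu21sq hr0])
  have hu1w : u₁ ≤ w₁ := by
    rw [hw₁def]
    exact Real.le_sqrt_of_sq_le (by nlinarith [mul_le_mul_of_nonneg_left (show u₁^2 ≤ 1 from le_trans husq hu21sq) hr0])
  have hu2w : u₂ ≤ w₂ := by
    rw [hw₂def]
    exact Real.le_sqrt_of_sq_le (by nlinarith [mul_le_mul_of_nonneg_left hu21sq hr0])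
  have hcross : u₁ * w₂ ≤ u₂ * w₁ := by
    have e1 : u₁ * w₂ = Real.sqrt (u₁^2 * (1 - r + r*u₂^2)) := by
      rw [Real.sqrt_mul (sq_nonneg _), Real.sqrt_sq hu0, hw₂def]
    have e2 : u₂ * w₁ = Real.sqrt (u₂^2 * (1 - r + r*u₁^2)) := by
      rw [Real.sqrt_mul (sq_nonneg _), Real.sqrt_sq hu20, hw₁def]
    rw [e1, e2]
    exact Real.sqrt_le_sqrt
      (by nlinarith [mul_nonneg (sub_nonneg.mpr hr1) (sub_nonneg.mpr husq)])
  clear_value w₁ w₂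
  -- key identities
  have hA : (w₂ - w₁) * (w₂ + w₁) = r * (u₂ - u₁) * (u₂ + u₁) := by
    linear_combination hw₂sq - hw₁sq
  have hB : (1 - w₂) * (1 + w₂) = r * ((1 - u₂) * (1 + u₂)) := by
    linear_combination -hw₂sq
  have hC : (u₁ + u₂) * (1 + w₂) ≤ (w₁ + w₂) * (1 + u₂) := by nlinarith
  rcases eq_or_lt_of_le (by positivity : (0:ℝ) ≤ w₁ + w₂) with hS | hS
  · -- w₁ = w₂ = 0, hence u₁ = u₂ = 0
    have hw₂z : w₂ = 0 := by linarith [hw12, hw₁0]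
    have hw₁z : w₁ = 0 := by linarith
    have hu₂z : u₂ = 0 := le_antisymm (hw₂z ▸ hu2w) hu20
    have hu₁z : u₁ = 0 := le_antisymm (hu₂z ▸ hu12) hu0
    nlinarith [hw₂z, hw₁z, hu₂z, hu₁z]
  · -- main case
    have h5 : r * (1 - u₂) * ((u₁ + u₂) * (1 + w₂)) ≤ r * (1 - u₂) * ((w₁ + w₂) * (1 + u₂)) :=
      mul_le_mul_of_nonneg_left hC (by nlinarith)
    have step2 : r * (u₁ + u₂) * (1 - u₂) ≤ (w₁ + w₂) * (1 - w₂) := by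
      have h6 : (r * (u₁ + u₂) * (1 - u₂)) * (1 + w₂) ≤ ((w₁ + w₂) * (1 - w₂)) * (1 + w₂) := by
        calc (r * (u₁ + u₂) * (1 - u₂)) * (1 + w₂) = r * (1 - u₂) * ((u₁ + u₂) * (1 + w₂)) := by ring
          _ ≤ r * (1 - u₂) * ((w₁ + w₂) * (1 + u₂)) := h5
          _ = (w₁ + w₂) * (r * ((1 - u₂) * (1 + u₂))) := by ring
          _ = (w₁ + w₂) * ((1 - w₂) * (1 + w₂)) := by rw [← hB]
          _ = ((w₁ + w₂) * (1 - w₂)) * (1 + w₂) := by ring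
      exact le_of_mul_le_mul_right h6 (by linarith)
    have step3 : ((w₂ - w₁) * (1 - u₂)) * (w₁ + w₂) ≤ ((u₂ - u₁) * (1 - w₂)) * (w₁ + w₂) := by
      calc ((w₂ - w₁) * (1 - u₂)) * (w₁ + w₂) = ((w₂ - w₁) * (w₂ + w₁)) * (1 - u₂) := by ring
        _ = (r * (u₂ - u₁) * (u₂ + u₁)) * (1 - u₂) := by rw [hA]
        _ = (u₂ - u₁) * (r * (u₁ + u₂) * (1 - u₂)) := by ring
        _ ≤ (u₂ - u₁) * ((w₁ + w₂) * (1 - w₂)) := by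
            exact mul_le_mul_of_nonneg_left step2 (by linarith)
        _ = ((u₂ - u₁) * (1 - w₂)) * (w₁ + w₂) := by ring
    exact le_of_mul_le_mul_right step3 hS

lemma pow_entry_nonneg {m : ℕ} (A : Matrix (Fin m) (Fin m) ℝ)
    (h : ∀ i j, 0 ≤ A i j) : ∀ (n : ℕ) (i j), 0 ≤ (A ^ n) i j := by
  intro n
  induction n with
  | zero => intro i j; simp [Matrix.one_apply]; split <;> norm_num
  | succ n ih =>
      intro i j
      rw [pow_succ, Matrix.mul_apply]
      exact Finset.sum_nonneg fun l _ => mul_nonneg (ih i l) (h l j)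

lemma vec_pow {m : ℕ} (A : Matrix (Fin m) (Fin m) ℝ) (c : Fin m → ℝ)
    (hc3 : ∀ j, ∑ i, c i * A i j = c j) :
    ∀ (n : ℕ) (j), ∑ i, c i * (A ^ n) i j = c j := by
  intro n
  induction n with
  | zero => intro j; simp [Matrix.one_apply, mul_ite, Finset.sum_ite_eq]
  | succ n ih =>
      intro j
      rw [pow_succ]
      simp only [Matrix.mul_apply, Finset.mul_sum]
      rw [Finset.sum_comm]
      calc ∑ l, ∑ i, c i * ((A ^ n) i l * A l j)
          = ∑ l, (∑ i, c i * (A ^ n) i l) * A l j := by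
            congr 1; ext l; rw [Finset.sum_mul]; congr 1; ext i; ring
        _ = ∑ l, c l * A l j := by
            congr 1; ext l; rw [ih l]
        _ = c j := hc3 j

lemma c_pos {m : ℕ} (A : Matrix (Fin m) (Fin m) ℝ) (hm : 3 ≤ m)
    (hA1 : ∀ i j, 0 ≤ A i j)
    (hAirr : ∀ i j : Fin m, i ≠ j → ∃ k, 1 ≤ k ∧ 0 < (A ^ k) i j)
    (c : Fin m → ℝ) (hc1 : ∀ i, 0 ≤ c i) (hc2 : ∑ i, c i = 1)
    (hc3 : ∀ j, ∑ i, c i * A i j = c j) : ∀ j, 0 < c j := by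
  have hm0 : 0 < m := by omega
  obtain ⟨i₀, -, hi₀⟩ : ∃ i ∈ Finset.univ, (0:ℝ) < c i := by
    apply Finset.exists_lt_of_sum_lt (f := fun _ => (0:ℝ))
    simp [hc2]
  intro j
  rcases eq_or_ne j i₀ with rfl | hne
  · exact hi₀
  · obtain ⟨k, -, hk⟩ := hAirr i₀ j (Ne.symm hne)
    have h1 : c i₀ * (A ^ k) i₀ j ≤ ∑ i, c i * (A ^ k) i j :=
      Finset.single_le_sum
        (fun i _ => mul_nonneg (hc1 i) (pow_entry_nonneg A hA1 k i j))
        (Finset.mem_univ i₀)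
    rw [vec_pow A c hc3 k j] at h1
    exact lt_of_lt_of_le (mul_pos hi₀ hk) h1
noncomputable def Xfun {m : ℕ} (c : Fin m → ℝ) (k : Fin m) (t : ℝ) : Fin m → ℝ :=
  fun i => if i = k then t else sroot (t*(1-t)*(c i / c k))

set_option maxHeartbeats 1000000 in
theorem stmt16 {m : ℕ} (hm : 3 ≤ m) (A : Matrix (Fin m) (Fin m) ℝ)
    (hA1 : ∀ i j, 0 ≤ A i j) (hA2 : ∀ i, ∑ j, A i j = 1) (hA3 : ∀ i, A i i = 0)
    (hAirr : ∀ i j : Fin m, i ≠ j → ∃ k, 1 ≤ k ∧ 0 < (A ^ k) i j)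
    (c : Fin m → ℝ) (hc1 : ∀ i, 0 ≤ c i) (hc2 : ∑ i, c i = 1)
    (hc3 : ∀ j, ∑ i, c i * A i j = c j) :
    ∀ ζ ∈ Set.Ioo (0 : ℝ) 1,
      ∃ x : Fin m → ℝ,
        ((∀ i, 0 < x i ∧ x i < 1) ∧ (∑ i, x i) = ζ ∧
          ∃ α > (0 : ℝ), ∀ i, x i * (1 - x i) = α * c i) ∧
        (∀ y : Fin m → ℝ,
          ((∀ i, 0 < y i ∧ y i < 1) ∧ (∑ i, y i) = ζ ∧
            ∃ α > (0 : ℝ), ∀ i, y i * (1 - y i) = α * c i) → y = x) ∧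
        (∀ i j, (x j < x i ↔ c j < c i) ∧ (x i = x j ↔ c i = c j)) := by
  intro ζ hζ
  obtain ⟨hζ0, hζ1⟩ := hζ
  have hcpos : ∀ j, 0 < c j := c_pos A hm hA1 hAirr c hc1 hc2 hc3
  obtain ⟨k, -, hk⟩ := Finset.exists_max_image Finset.univ c ⟨⟨0, by omega⟩, Finset.mem_univ _⟩
  have hmax : ∀ i, c i ≤ c k := fun i => hk i (Finset.mem_univ i)
  have hK : 0 < c k := hcpos k
  have hK1 : c k ≤ 1 := by
    rw [← hc2]
    exact Finset.single_le_sum (fun i _ => hc1 i) (Finset.mem_univ k)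
  set X : ℝ → Fin m → ℝ := Xfun c k with hXdef
  have hXk : ∀ s : ℝ, X s k = s := fun s => by simp [hXdef, Xfun]
  have hXi : ∀ (s : ℝ) (i : Fin m), i ≠ k → X s i = sroot (s*(1-s)*(c i / c k)) :=
    fun s i hi => by simp [hXdef, Xfun, hi]
  set F : ℝ → ℝ := fun s => ∑ i, X s i with hFdef
  have hFapp : ∀ s : ℝ, F s = ∑ i, X s i := fun _ => rfl
  -- continuity
  have hFcont : Continuous F := by
    rw [hFdef]
    apply continuous_finset_sum
    intro i _
    by_cases hi : i = k
    · simpa [hXdef, Xfun, hi] using continuous_id'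
    · simp only [hXdef, Xfun, if_neg hi]
      unfold sroot
      fun_prop
  clear_value X F
  -- basic bounds on the sroot argument
  have hparg : ∀ (s : ℝ) (i : Fin m), 0 ≤ s → s ≤ 1 →
      0 ≤ s*(1-s)*(c i / c k) ∧ s*(1-s)*(c i / c k) ≤ 1/4 := by
    intro s i hs0 hs1
    have hd0 : 0 ≤ c i / c k := div_nonneg (hc1 i) hK.le
    have hd1 : c i / c k ≤ 1 := (div_le_one hK).mpr (hmax i)
    have hq0 : 0 ≤ s*(1-s) := mul_nonneg hs0 (by linarith)
    have hq1 : s*(1-s) ≤ 1/4 := by nlinarith [sq_nonneg (1-2*s)]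
    constructor
    · exact mul_nonneg hq0 hd0
    · calc s*(1-s)*(c i / c k) ≤ s*(1-s)*1 := mul_le_mul_of_nonneg_left hd1 hq0
        _ ≤ 1/4 := by linarith
  have hX_nonneg : ∀ (s : ℝ) (i : Fin m), 0 ≤ s → s ≤ 1 → 0 ≤ X s i := by
    intro s i hs0 hs1
    by_cases hi : i = k
    · rw [hi, hXk]; exact hs0
    · rw [hXi s i hi]
      exact sroot_nonneg (hparg s i hs0 hs1).1 (hparg s i hs0 hs1).2
  have hX_poshalf : ∀ (s : ℝ) (i : Fin m), 0 < s → s < 1 → i ≠ k →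
      0 < X s i ∧ X s i ≤ 1/2 := by
    intro s i hs0 hs1 hi
    rw [hXi s i hi]
    refine ⟨sroot_pos ?_, sroot_le_half _⟩
    exact mul_pos (mul_pos hs0 (by linarith)) (div_pos (hcpos i) hK)
  have hFsum : ∀ s : ℝ, F s = s + ∑ i ∈ Finset.univ.erase k, X s i := by
    intro s
    rw [hFapp]
    rw [← Finset.add_sum_erase Finset.univ (X s) (Finset.mem_univ k), hXk]
  -- IVT endpoints
  set a : ℝ := ζ * c k / (2*(c k + 2)) with hadef
  set b : ℝ := (1+ζ)/2 with hbdef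
  have ha0 : 0 < a := by
    apply div_pos (mul_pos hζ0 hK); linarith
  have hab2 : a ≤ ζ/2 := by
    rw [hadef, div_le_div_iff₀ (by linarith) (by norm_num)]
    nlinarith
  have hab : a ≤ b := by rw [hbdef]; linarith
  have hb1 : b < 1 := by rw [hbdef]; linarith
  have ha1 : a < 1 := lt_of_le_of_lt hab hb1
  have hFa : F a ≤ ζ/2 := by
    have hbound : ∀ i ∈ Finset.univ.erase k, X a i ≤ 2*a/(c k) * c i := by
      intro i hi
      have hik : i ≠ k := Finset.ne_of_mem_erase hi
      rw [hXi a i hik]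
      calc sroot (a*(1-a)*(c i / c k)) ≤ 2*(a*(1-a)*(c i / c k)) :=
            sroot_le_two (hparg a i ha0.le ha1.le).1 (hparg a i ha0.le ha1.le).2
        _ = 2*(a*(1-a))*(c i)/(c k) := by ring
        _ ≤ 2*a*(c i)/(c k) := by
            apply div_le_div_of_nonneg_right ?_ hK.le
            nlinarith [mul_nonneg (mul_nonneg ha0.le ha0.le) (hc1 i)]
        _ = 2*a/(c k) * c i := by ring
    have hsum2 : ∑ i ∈ Finset.univ.erase k, X a i ≤ 2*a/(c k) * 1 := by
      calc ∑ i ∈ Finset.univ.erase k, X a i ≤ ∑ i ∈ Finset.univ.erase k, 2*a/(c k) * c i :=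
            Finset.sum_le_sum hbound
        _ = 2*a/(c k) * ∑ i ∈ Finset.univ.erase k, c i := by rw [Finset.mul_sum]
        _ ≤ 2*a/(c k) * 1 := by
            apply mul_le_mul_of_nonneg_left ?_ (by positivity)
            rw [← hc2]
            exact Finset.sum_le_sum_of_subset_of_nonneg (Finset.erase_subset _ _)
              (fun i _ _ => hc1 i)
    have hval : a + 2*a/(c k) = ζ/2 := by
      rw [hadef]; field_simp
    rw [hFsum a]; linarith
  have hFb : b ≤ F b := by
    rw [hFsum b]
    have : 0 ≤ ∑ i ∈ Finset.univ.erase k, X b i :=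
      Finset.sum_nonneg fun i _ => hX_nonneg b i (by rw [hbdef]; linarith) hb1.le
    linarith
  obtain ⟨t, ht, hFt⟩ := intermediate_value_Icc hab hFcont.continuousOn
    (show ζ ∈ Set.Icc (F a) (F b) from Set.mem_Icc.mpr ⟨by linarith, by linarith [hFb]⟩)
  have ht0 : 0 < t := lt_of_lt_of_le ha0 ht.1
  have ht1 : t < 1 := lt_of_le_of_lt ht.2 hb1
  have hFt' : ∑ i, X t i = ζ := by rw [← hFapp]; exact hFt
  -- key uniqueness comparison
  have huniq : ∀ t₁ t₂ : ℝ, 0 < t₁ → t₁ < t₂ → t₂ < 1 → F t₁ = ζ → F t₂ = ζ → False := by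
    intro t₁ t₂ h1 h12 h2 hf1 hf2
    rcases le_or_gt (t₁*(1-t₁)) (t₂*(1-t₂)) with hcase | hcase
    · have hlt : F t₁ < F t₂ := by
        rw [hFapp t₁, hFapp t₂]
        apply Finset.sum_lt_sum
        · intro i _
          by_cases hi : i = k
          · rw [hi, hXk, hXk]; linarith
          · rw [hXi t₁ i hi, hXi t₂ i hi]
            apply sroot_mono_weak
            apply mul_le_mul_of_nonneg_right hcase (div_nonneg (hc1 i) hK.le)
        · exact ⟨k, Finset.mem_univ k, by rw [hXk, hXk]; exact h12⟩
      rw [hf1, hf2] at hlt; exact lt_irrefl _ hlt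
    · have ht2half : 1/2 < t₂ := by nlinarith
      have hsum1 : 1 < t₁ + t₂ := by nlinarith
      set u₁ : ℝ := |1 - 2*t₁| with hu₁def
      set u₂ : ℝ := 2*t₂ - 1 with hu₂def
      have hu₂0 : 0 < u₂ := by rw [hu₂def]; linarith
      have hu₂1 : u₂ < 1 := by rw [hu₂def]; linarith
      have hu₁0 : 0 ≤ u₁ := abs_nonneg _
      have hu₁sq : u₁^2 = (1-2*t₁)^2 := sq_abs _
      have hu₂eq : u₂ = 2*t₂ - 1 := hu₂def
      have hu₁abs : -u₁ ≤ 1 - 2*t₁ := by rw [hu₁def]; exact neg_abs_le _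
      have h12u : u₁ < u₂ := by
        rw [hu₁def]
        exact abs_lt.mpr ⟨by rw [hu₂def]; linarith, by rw [hu₂def]; linarith⟩
      clear_value u₁ u₂
      have hterm : ∀ i ∈ Finset.univ.erase k,
          (X t₁ i - X t₂ i) * (1-u₂) ≤ (u₂ - u₁) * X t₂ i := by
        intro i hi
        have hik : i ≠ k := Finset.ne_of_mem_erase hi
        have hr0 : 0 ≤ c i / c k := div_nonneg (hc1 i) hK.le
        have hr1 : c i / c k ≤ 1 := (div_le_one hK).mpr (hmax i)
        have e1 : (1 : ℝ) - 4*(t₁*(1-t₁)*(c i / c k)) = 1 - (c i/c k) + (c i/c k)*u₁^2 := by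
          rw [hu₁sq]; ring
        have e2 : (1 : ℝ) - 4*(t₂*(1-t₂)*(c i / c k)) = 1 - (c i/c k) + (c i/c k)*u₂^2 := by
          rw [hu₂def]; ring
        have hX1 : X t₁ i = (1 - Real.sqrt (1 - (c i/c k) + (c i/c k)*u₁^2))/2 := by
          rw [hXi t₁ i hik]; unfold sroot; rw [e1]
        have hX2 : X t₂ i = (1 - Real.sqrt (1 - (c i/c k) + (c i/c k)*u₂^2))/2 := by
          rw [hXi t₂ i hik]; unfold sroot; rw [e2]
        have hchord := chord hr0 hr1 hu₁0 h12u.le hu₂1.le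
        rw [hX1, hX2]
        nlinarith [hchord]
      have hsum : (∑ i ∈ Finset.univ.erase k, (X t₁ i - X t₂ i)) * (1-u₂) ≤
          (u₂-u₁) * ∑ i ∈ Finset.univ.erase k, X t₂ i := by
        rw [Finset.sum_mul, Finset.mul_sum]
        exact Finset.sum_le_sum hterm
      have hS2 : ∑ i ∈ Finset.univ.erase k, X t₂ i = ζ - t₂ := by
        have := hFsum t₂; rw [hf2] at this; linarith
      have hS1 : ∑ i ∈ Finset.univ.erase k, (X t₁ i - X t₂ i) = t₂ - t₁ := by
        rw [Finset.sum_sub_distrib]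
        have e1 := hFsum t₁; have e2 := hFsum t₂
        rw [hf1] at e1; rw [hf2] at e2
        linarith
      rw [hS1, hS2] at hsum
      have hζt₂ : 0 ≤ ζ - t₂ := by
        have := Finset.sum_nonneg fun i (hi : i ∈ Finset.univ.erase k) =>
          hX_nonneg t₂ i (by linarith) h2.le
        rw [hS2] at this; exact this
      have hgap : ζ - t₂ < (1-u₂)/2 := by rw [hu₂eq]; linarith
      have hfin : (u₂-u₁) * (ζ - t₂) < (u₂-u₁) * ((1-u₂)/2) :=
        mul_lt_mul_of_pos_left hgap (by linarith)
      have hub : u₂ - u₁ ≤ 2*(t₂ - t₁) := by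
        rw [hu₂eq]; linarith
      have hub2 : (u₂-u₁) * ((1-u₂)/2) ≤ (t₂ - t₁) * (1-u₂) := by nlinarith
      linarith
  -- order helpers
  have hstrictmax : 1/2 < t → ∀ j, j ≠ k → c j < c k := by
    intro hth j hjk
    rcases lt_or_eq_of_le (hmax j) with h | h
    · exact h
    · exfalso
      have hr1 : c j / c k = 1 := by rw [h]; exact div_self hK.ne'
      have hXj : X t j = 1 - t := by
        rw [hXi t j hjk, hr1]
        unfold sroot
        rw [show (1:ℝ) - 4*(t*(1-t)*1) = (2*t-1)^2 by ring,
          Real.sqrt_sq (by linarith)]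
        ring
      have hsub : ({k, j} : Finset (Fin m)) ⊆ Finset.univ := Finset.subset_univ _
      have h' := Finset.sum_le_sum_of_subset_of_nonneg hsub
        (fun l _ _ => hX_nonneg t l ht0.le ht1.le)
      rw [Finset.sum_pair (Ne.symm hjk), hXk, hXj, hFt'] at h'
      linarith
  have htt : 0 < t*(1-t) := mul_pos ht0 (by linarith)
  have hord : ∀ i j, c j < c i → X t j < X t i := by
    intro i j hc
    by_cases hik : i = k
    · rw [hik] at hc ⊢
      have hjk : j ≠ k := by rintro rfl; exact lt_irrefl _ hc
      rcases le_or_gt t (1/2) with hth | hth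
      · have hXkt : X t k = sroot (t*(1-t)*1) := by
          rw [hXk]
          unfold sroot
          rw [show (1:ℝ) - 4*(t*(1-t)*1) = (1-2*t)^2 by ring,
            Real.sqrt_sq (by linarith)]
          ring
        rw [hXkt, hXi t j hjk]
        apply sroot_mono (hparg t j ht0.le ht1.le).1 ?_ (by nlinarith)
        have h1 : c j / c k < 1 := (div_lt_one hK).mpr hc
        calc t*(1-t)*(c j / c k) < t*(1-t)*1 := mul_lt_mul_of_pos_left h1 htt
          _ = t*(1-t)*1 := rfl
      · have h2 := hX_poshalf t j ht0 ht1 hjk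
        rw [hXk]; linarith [h2.2]
    · by_cases hjk : j = k
      · rw [hjk] at hc
        exact absurd hc (not_lt.mpr (hmax i))
      · rw [hXi t i hik, hXi t j hjk]
        apply sroot_mono (hparg t j ht0.le ht1.le).1 ?_ (hparg t i ht0.le ht1.le).2
        have h1 : c j / c k < c i / c k := by gcongr
        exact mul_lt_mul_of_pos_left h1 htt
  have hinj : ∀ i j, c i = c j → X t i = X t j := by
    intro i j hcij
    by_cases hik : i = k
    · by_cases hjk : j = k
      · rw [hik, hjk]
      · rw [hik] at hcij ⊢
        have hth : t ≤ 1/2 := by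
          by_contra h
          push_neg at h
          have h2 := hstrictmax h j hjk
          rw [hcij] at h2
          exact lt_irrefl _ h2
        have hr1 : c j / c k = 1 := by rw [← hcij]; exact div_self hK.ne'
        rw [hXk, hXi t j hjk, hr1]
        unfold sroot
        rw [show (1:ℝ) - 4*(t*(1-t)*1) = (1-2*t)^2 by ring,
          Real.sqrt_sq (by linarith)]
        ring
    · by_cases hjk : j = k
      · rw [hjk] at hcij ⊢
        have hth : t ≤ 1/2 := by
          by_contra h
          push_neg at h
          have h2 := hstrictmax h i hik
          rw [← hcij] at h2
          exact lt_irrefl _ h2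
        have hr1 : c i / c k = 1 := by rw [hcij]; exact div_self hK.ne'
        rw [hXk, hXi t i hik, hr1]
        unfold sroot
        rw [show (1:ℝ) - 4*(t*(1-t)*1) = (1-2*t)^2 by ring,
          Real.sqrt_sq (by linarith)]
        ring
      · rw [hXi t i hik, hXi t j hjk, hcij]
  -- the constructed solution
  refine ⟨X t, ⟨?_, ?_, ?_⟩, ?_, ?_⟩
  · intro i
    by_cases hi : i = k
    · rw [hi, hXk]; exact ⟨ht0, ht1⟩
    · obtain ⟨h1, h2⟩ := hX_poshalf t i ht0 ht1 hi
      exact ⟨h1, by linarith⟩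
  · exact hFt'
  · refine ⟨t*(1-t)/(c k), div_pos (mul_pos ht0 (by linarith)) hK, ?_⟩
    intro i
    by_cases hi : i = k
    · rw [hi, hXk]; field_simp
    · rw [hXi t i hi]
      rw [sroot_eq (hparg t i ht0.le ht1.le).1 (hparg t i ht0.le ht1.le).2]
      ring
  · -- uniqueness
    rintro y ⟨hy1, hy2, β, hβ, hy3⟩
    have hyhalf : ∀ j, j ≠ k → y j < 1/2 := by
      intro j hjk
      by_contra hge
      push_neg at hge
      have hpair : ∀ i, i ≠ j → y i + y j < 1 := by
        intro i hij
        have hsub : ({i, j} : Finset (Fin m)) ⊆ Finset.univ := Finset.subset_univ _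
        have h := Finset.sum_le_sum_of_subset_of_nonneg hsub
          (fun l _ _ => (hy1 l).1.le)
        rw [Finset.sum_pair hij, hy2] at h
        linarith
      have hcj : ∀ i, i ≠ j → c i < c j := by
        intro i hij
        have h1 : y i < 1 - y j := by linarith [hpair i hij]
        have h2 : y i < y j := by linarith
        have h3 : y i * (1 - y i) < y j * (1 - y j) := by nlinarith [(hy1 i).1]
        rw [hy3 i, hy3 j] at h3
        exact lt_of_mul_lt_mul_left h3 hβ.le
      exact absurd (hmax j) (not_le.mpr (hcj k (Ne.symm hjk)))
    have hβval : β = (y k)*(1-(y k))/(c k) := by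
      rw [eq_div_iff hK.ne']
      linarith [hy3 k]
    have hyX : y = X (y k) := by
      funext i
      by_cases hi : i = k
      · rw [hi, hXk]
      · rw [hXi (y k) i hi]
        have harg : (y k)*(1-(y k))*(c i/(c k)) = β * c i := by rw [hβval]; ring
        rw [harg]
        have h1 : Real.sqrt (1 - 4*(β*c i)) = 1 - 2*y i := by
          rw [show 1 - 4*(β*c i) = (1-2*y i)^2 by linear_combination 4*(hy3 i)]
          exact Real.sqrt_sq (by linarith [hyhalf i hi])
        unfold sroot; rw [h1]; ring
    have hFy : F (y k) = ζ := by
      rw [hFapp, ← hy2]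
      congr 1
      ext i
      rw [← hyX]
    have hteq : y k = t := by
      rcases lt_trichotomy (y k) t with h | h | h
      · exact absurd (huniq (y k) t (hy1 k).1 h ht1 hFy hFt) not_false
      · exact h
      · exact absurd (huniq t (y k) ht0 h (hy1 k).2 hFt hFy) not_false
    rw [hyX, hteq]
  · -- order conclusions
    intro i j
    constructor
    · constructor
      · intro h
        rcases lt_trichotomy (c j) (c i) with h' | h' | h'
        · exact h'
        · exact absurd (hinj j i h') (ne_of_lt h)
        · exact absurd h (not_lt.mpr (hord j i h').le)
      · exact hord i j
    · constructor
      · intro h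
        rcases lt_trichotomy (c i) (c j) with h' | h' | h'
        · have h2 := hord j i h'
          rw [h] at h2
          exact absurd h2 (lt_irrefl _)
        · exact h'
        · have h2 := hord i j h'
          rw [h] at h2
          exact absurd h2 (lt_irrefl _)
      · exact hinj i j
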